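/- arXiv:1705.00826 — 11 statements merged into one kernel-verified Lean document; each statement's English description precedes it below -/
import Mathlib

section
/- Let G = (V,E) be a finite simple graph and let v ∈ V. If there exists a vertex u adjacent to v such that N[u] ⊆ N[v], then v is total domination-covered in G; that is, every total dominating set of G∖v is a total dominating set of G, and the total dominating sets of G∖v are exactly those total dominating sets of G not containing v. -/
open Polynomial

/-- `D` is a total dominating set of `G`: every vertex has a neighbor in `D`. -/
def SimpleGraph.IsTDS {V : Type*} (G : SimpleGraph V) (D : Finset V) : Prop :=
  ∀ v, ∃ u ∈ D, G.Adj v u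

/-- `d_t(G,i)`: the number of total dominating sets of `G` of cardinality `i`. -/
noncomputable def SimpleGraph.dt {V : Type*} [Fintype V] (G : SimpleGraph V) (i : ℕ) : ℕ :=
  Set.ncard {D : Finset V | D.card = i ∧ G.IsTDS D}

/-- The total domination polynomial `D_t(G,x) = Σ_{i=1}^{n} d_t(G,i) xⁱ` (over `ℂ`). -/
noncomputable def SimpleGraph.DtPoly {V : Type*} [Fintype V] (G : SimpleGraph V) :
    Polynomial ℂ :=
  ∑ i ∈ Finset.Icc 1 (Fintype.card V), Polynomial.C (G.dt i : ℂ) * Polynomial.X ^ i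

/-- `w` is a support vertex of `G`: it is adjacent to a leaf (a vertex of degree one). -/
def SimpleGraph.IsSupportVertex {V : Type*} (G : SimpleGraph V) (w : V) : Prop :=
  ∃ l, G.Adj w l ∧ G.neighborSet l = {w}

/-- The total domination number: minimum cardinality of a total dominating set. -/
noncomputable def SimpleGraph.gammaT {V : Type*} [Fintype V] (G : SimpleGraph V) : ℕ :=
  sInf {i | ∃ D : Finset V, D.card = i ∧ G.IsTDS D}

/-- If some vertex `u` adjacent to `v` satisfies `N[u] ⊆ N[v]`, then `v` is total
domination-covered: the total dominating sets of `G∖v` (subsets of `V∖{v}` totally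
dominating every vertex other than `v` in the deleted graph) are exactly the total
dominating sets of `G` not containing `v`. -/
theorem stmt_0 {V : Type*} [Fintype V] (G : SimpleGraph V) (v : V)
    (h : ∃ u, G.Adj v u ∧
      insert u (G.neighborSet u) ⊆ insert v (G.neighborSet v)) :
    ∀ D : Finset V,
      (v ∉ D ∧ ∀ w, w ≠ v → ∃ u ∈ D, G.Adj w u) ↔ (G.IsTDS D ∧ v ∉ D) := by
  obtain ⟨u, huv, hsub⟩ := h
  intro D
  constructor
  · rintro ⟨hvD, hdom⟩
    refine ⟨?_, hvD⟩
    intro w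
    by_cases hw : w = v
    · subst hw
      obtain ⟨x, hxD, hx⟩ := hdom u (G.ne_of_adj huv).symm
      have hx' : x ∈ insert w (G.neighborSet w) := hsub (Set.mem_insert_iff.mpr (Or.inr hx))
      rcases Set.mem_insert_iff.mp hx' with hx' | hx'
      · exact absurd (hx' ▸ hxD) hvD
      · exact ⟨x, hxD, hx'⟩
    · exact hdom w hw
  · rintro ⟨hTDS, hvD⟩
    exact ⟨hvD, fun w _ => hTDS w⟩
end

section
/- Let G = (V,E) be a finite simple graph and let e = {u,v} ∈ E. If e is an irrelevant edge of G (i.e., D_t(G,x) = D_t(G∖e,x)), then both u and v are total domination-covered in G∖e; that is, for w ∈ {u,v}, every total dominating set of (G∖e)∖w is a total dominating set of G∖e, and the total dominating sets of (G∖e)∖w are exactly those total dominating sets of G∖e not containing w. -/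
open Polynomial

lemma dt_eq_of_irr {V : Type*} [Fintype V] (G G' : SimpleGraph V)
    (hirr : G.DtPoly = G'.DtPoly) {i : ℕ} (hi : i ∈ Finset.Icc 1 (Fintype.card V)) :
    G.dt i = G'.dt i := by
  have h := congrArg (fun p => Polynomial.coeff p i) hirr
  simp only [SimpleGraph.DtPoly, Polynomial.finset_sum_coeff, Polynomial.coeff_C_mul,
    Polynomial.coeff_X_pow, mul_ite, mul_one, mul_zero, Finset.sum_ite_eq, hi,
    if_true] at h
  exact_mod_cast h

lemma tds_del {V : Type*} [Fintype V] (G : SimpleGraph V) (s : Set (Sym2 V))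
    (hirr : G.DtPoly = (G.deleteEdges s).DtPoly) {D : Finset V}
    (hD : G.IsTDS D) (hne : D.Nonempty) : (G.deleteEdges s).IsTDS D := by
  have hcard : D.card ∈ Finset.Icc 1 (Fintype.card V) :=
    Finset.mem_Icc.2 ⟨Finset.card_pos.2 hne, Finset.card_le_univ D⟩
  have hsub : {E : Finset V | E.card = D.card ∧ (G.deleteEdges s).IsTDS E}
      ⊆ {E : Finset V | E.card = D.card ∧ G.IsTDS E} := by
    rintro E ⟨h1, h2⟩
    refine ⟨h1, fun x => ?_⟩
    obtain ⟨y, hy, hadj⟩ := h2 x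
    exact ⟨y, hy, (SimpleGraph.deleteEdges_adj.1 hadj).1⟩
  have hn : ({E : Finset V | E.card = D.card ∧ G.IsTDS E}).ncard
      ≤ ({E : Finset V | E.card = D.card ∧ (G.deleteEdges s).IsTDS E}).ncard :=
    le_of_eq (dt_eq_of_irr G _ hirr hcard)
  have heq := Set.eq_of_subset_of_ncard_le hsub hn (Set.toFinite _)
  have hDmem : D ∈ {E : Finset V | E.card = D.card ∧ (G.deleteEdges s).IsTDS E} := by
    rw [heq]; exact ⟨rfl, hD⟩
  exact hDmem.2

lemma aux_cov {V : Type*} [Fintype V] (G : SimpleGraph V) (u v : V) (he : G.Adj u v)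
    (hirr : G.DtPoly = (G.deleteEdges {s(u, v)}).DtPoly) (D : Finset V) :
    (u ∉ D ∧ ∀ x, x ≠ u → ∃ y ∈ D, (G.deleteEdges {s(u, v)}).Adj x y) ↔
      ((G.deleteEdges {s(u, v)}).IsTDS D ∧ u ∉ D) := by
  classical
  constructor
  · rintro ⟨hu, hx⟩
    refine ⟨?_, hu⟩
    have hTDS : G.IsTDS (insert v D) := by
      intro x
      by_cases hxu : x = u
      · exact ⟨v, Finset.mem_insert_self _ _, hxu ▸ he⟩
      · obtain ⟨y, hy, hadj⟩ := hx x hxu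
        exact ⟨y, Finset.mem_insert_of_mem hy, (SimpleGraph.deleteEdges_adj.1 hadj).1⟩
    have h' := tds_del G _ hirr hTDS ⟨v, Finset.mem_insert_self _ _⟩
    obtain ⟨y, hy, hadj⟩ := h' u
    have hyv : y ≠ v := by
      rintro rfl
      exact (SimpleGraph.deleteEdges_adj.1 hadj).2 (by simp)
    have hyD : y ∈ D := (Finset.mem_insert.1 hy).resolve_left hyv
    intro x
    by_cases hxu : x = u
    · exact ⟨y, hyD, hxu ▸ hadj⟩
    · exact hx x hxu
  · rintro ⟨hT, hu⟩
    exact ⟨hu, fun x _ => hT x⟩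

/-- If `e = {u,v}` is an irrelevant edge of `G` (i.e. `D_t(G,x) = D_t(G∖e,x)`), then both
endpoints `u` and `v` are total domination-covered in `G∖e`: for `w ∈ {u,v}`, the total
dominating sets of `(G∖e)∖w` are exactly the total dominating sets of `G∖e` not
containing `w`. -/
theorem stmt_1 {V : Type*} [Fintype V] (G : SimpleGraph V) (u v : V) (he : G.Adj u v)
    (hirr : G.DtPoly = (G.deleteEdges {s(u, v)}).DtPoly) :
    ∀ w ∈ ({u, v} : Set V), ∀ D : Finset V,
      (w ∉ D ∧ ∀ x, x ≠ w → ∃ y ∈ D, (G.deleteEdges {s(u, v)}).Adj x y) ↔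
        ((G.deleteEdges {s(u, v)}).IsTDS D ∧ w ∉ D) := by
  rintro w hw D
  rcases hw with rfl | rfl
  · exact aux_cov G w v he hirr D
  · have hs : s(w, u) = s(u, w) := Sym2.eq_swap
    have h2 := aux_cov G w u he.symm (by rw [hs]; exact hirr) D
    rwa [hs] at h2
end

section
/- For all natural numbers n ≥ 1 and k ≥ 3, the total domination number of the (n,k)-firecracker graph F(n,k) equals 2n. -/
open Polynomial

/-- The `(n,k)`-firecracker graph `F(n,k)`: `n` disjoint copies of the star `S_k`
(in copy `i`, vertex `(i,0)` is the center, adjacent to the leaves `(i,j)`, `j ≠ 0`),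
concatenated by joining the chosen leaf `(i,1)` of copy `i` to the chosen leaf
`(i+1,1)` of copy `i+1`. -/
def firecracker (n k : ℕ) : SimpleGraph (Fin n × Fin k) :=
  SimpleGraph.fromRel (fun a b =>
    (a.1 = b.1 ∧ (a.2 : ℕ) = 0 ∧ (b.2 : ℕ) ≠ 0) ∨
    ((a.1 : ℕ) + 1 = (b.1 : ℕ) ∧ (a.2 : ℕ) = 1 ∧ (b.2 : ℕ) = 1))

/-- For `n ≥ 1` and `k ≥ 3`, the total domination number of `F(n,k)` is `2n`. -/
theorem stmt_4 (n k : ℕ) (hn : 1 ≤ n) (hk : 3 ≤ k) :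
    (firecracker n k).gammaT = 2 * n := by
  classical
  set c0 : Fin k := ⟨0, by omega⟩ with hc0
  -- Upper bound witness
  set D0 : Finset (Fin n × Fin k) :=
    (Finset.univ : Finset (Fin n × Fin 2)).image
      (fun p => (p.1, Fin.castLE (by omega) p.2)) with hD0
  have hinj : Function.Injective
      (fun p : Fin n × Fin 2 => (p.1, Fin.castLE (show 2 ≤ k by omega) p.2)) := by
    intro a b h
    simp only [Prod.mk.injEq] at h
    exact Prod.ext h.1 (Fin.castLE_injective _ h.2)
  have hcard : D0.card = 2 * n := by
    rw [hD0, Finset.card_image_of_injective _ hinj, Finset.card_univ]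
    simp [Fintype.card_prod, Nat.mul_comm]
  have hmem0 : ∀ (i : Fin n) (j : Fin 2),
      (i, Fin.castLE (show 2 ≤ k by omega) j) ∈ D0 := by
    intro i j
    rw [hD0, Finset.mem_image]
    exact ⟨(i, j), Finset.mem_univ _, rfl⟩
  have hTDS : (firecracker n k).IsTDS D0 := by
    intro v
    by_cases h : (v.2 : ℕ) = 0
    · refine ⟨(v.1, Fin.castLE (show 2 ≤ k by omega) 1), hmem0 v.1 1, ?_⟩
      simp only [firecracker, SimpleGraph.fromRel_adj]
      constructor
      · intro he
        have := congrArg (fun p => ((p.2 : Fin k) : ℕ)) he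
        simp [h] at this
      · left; left; exact ⟨trivial, h, by simp⟩
    · refine ⟨(v.1, Fin.castLE (show 2 ≤ k by omega) 0), hmem0 v.1 0, ?_⟩
      simp only [firecracker, SimpleGraph.fromRel_adj]
      constructor
      · intro he
        have := congrArg (fun p => ((p.2 : Fin k) : ℕ)) he
        simp at this
        omega
      · right; left; exact ⟨trivial, by simp, h⟩
  have hmemS : 2 * n ∈ {i | ∃ D : Finset (Fin n × Fin k),
      D.card = i ∧ (firecracker n k).IsTDS D} := ⟨D0, hcard, hTDS⟩
  -- Lower bound
  have hlow : ∀ m ∈ {i | ∃ D : Finset (Fin n × Fin k),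
      D.card = i ∧ (firecracker n k).IsTDS D}, 2 * n ≤ m := by
    rintro m ⟨D, rfl, hD⟩
    choose f hfD hfadj using hD
    have hcenter : ∀ i : Fin n, (i, c0) ∈ D := by
      intro i
      have h2 := hfadj (i, (⟨2, by omega⟩ : Fin k))
      have hmem := hfD (i, (⟨2, by omega⟩ : Fin k))
      have heq : f (i, (⟨2, by omega⟩ : Fin k)) = (i, c0) := by
        simp only [firecracker, SimpleGraph.fromRel_adj] at h2
        obtain ⟨hne, h | h⟩ := h2
        · rcases h with ⟨-, h0, -⟩ | ⟨-, h0, -⟩ <;> omega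
        · rcases h with ⟨ha, hb, -⟩ | ⟨-, -, hc⟩
          · exact Prod.ext ha (Fin.ext (by simpa [hc0] using hb))
          · omega
      rwa [heq] at hmem
    have hleaf : ∀ i : Fin n,
        (f (i, c0)).1 = i ∧ ((f (i, c0)).2 : ℕ) ≠ 0 := by
      intro i
      have h2 := hfadj (i, c0)
      simp only [firecracker, SimpleGraph.fromRel_adj] at h2
      obtain ⟨hne, h | h⟩ := h2
      · rcases h with ⟨ha, -, hb⟩ | ⟨-, hb, -⟩
        · exact ⟨ha.symm, hb⟩
        · simp [hc0] at hb
      · rcases h with ⟨-, -, hc⟩ | ⟨-, -, hc⟩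
        · simp [hc0] at hc
        · simp [hc0] at hc
    set g : Fin n × Bool → Fin n × Fin k :=
      fun p => if p.2 then f (p.1, c0) else (p.1, c0) with hg
    have hgD : ∀ p ∈ (Finset.univ : Finset (Fin n × Bool)), g p ∈ D := by
      rintro ⟨i, b⟩ -
      cases b
      · simpa [hg] using hcenter i
      · simpa [hg] using hfD (i, c0)
    have hginj : Function.Injective g := by
      rintro ⟨i, b⟩ ⟨i', b'⟩ h
      have hfst : ∀ (j : Fin n) (c : Bool), (g (j, c)).1 = j := by
        rintro j (_|_)
        · simp [hg]
        · simp [hg, (hleaf j).1]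
      have hsnd : ∀ (j : Fin n) (c : Bool), (((g (j, c)).2 : ℕ) = 0) ↔ c = false := by
        rintro j (_|_)
        · simp [hg, hc0]
        · simp [hg, (hleaf j).2]
      have hi : i = i' := by rw [← hfst i b, ← hfst i' b', h]
      have hb : b = b' := by
        have h1 := hsnd i b
        have h2 := hsnd i' b'
        rw [h] at h1
        have h3 := h1.symm.trans h2
        revert h3
        cases b <;> cases b' <;> decide
      rw [hi, hb]
    have hle := Finset.card_le_card_of_injOn g hgD (Function.Injective.injOn hginj)
    simpa [Fintype.card_prod, Nat.mul_comm] using hle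
  exact le_antisymm (Nat.sInf_le hmemS) (le_csInf ⟨_, hmemS⟩ hlow)
end

section
/- For all natural numbers n ≥ 1 and k ≥ 3, the total domination polynomial of the (n,k)-firecracker graph satisfies D_t(F(n,k),x) = (x(x+1)^{k−1} − x)^n. -/
open Polynomial

namespace FireAux

open Finset

lemma tds_iff (n m : ℕ) (D : Finset (Fin n × Fin (m+3))) :
    (firecracker n (m+3)).IsTDS D ↔
      ∀ i : Fin n, (i, (0 : Fin (m+3))) ∈ D ∧ ∃ j : Fin (m+3), j ≠ 0 ∧ (i, j) ∈ D := by
  constructor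
  · intro h i
    constructor
    · obtain ⟨u, hu, hadj⟩ := h (i, (2 : Fin (m+3)))
      rw [firecracker, SimpleGraph.fromRel_adj] at hadj
      obtain ⟨hne, hr⟩ := hadj
      simp only [Fin.val_two, Fin.val_zero, Fin.val_one] at hr
      have : u = (i, (0 : Fin (m+3))) := by
        obtain ⟨u1, u2⟩ := u
        simp only at hr
        rcases hr with (⟨h1, h2, h3⟩ | ⟨h1, h2, h3⟩) | (⟨h1, h2, h3⟩ | ⟨h1, h2, h3⟩)
        · omega
        · omega
        · exact Prod.ext h1 (Fin.ext (by simpa using h2))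
        · omega
      exact this ▸ hu
    · obtain ⟨u, hu, hadj⟩ := h (i, (0 : Fin (m+3)))
      rw [firecracker, SimpleGraph.fromRel_adj] at hadj
      obtain ⟨hne, hr⟩ := hadj
      simp only [Fin.val_zero, Fin.val_one] at hr
      obtain ⟨u1, u2⟩ := u
      simp only at hr
      refine ⟨u2, ?_, ?_⟩
      · rcases hr with (⟨h1, h2, h3⟩ | ⟨h1, h2, h3⟩) | (⟨h1, h2, h3⟩ | ⟨h1, h2, h3⟩) <;>
          first
          | (intro hc; apply h3; simp [hc])
          | omega
      · have : u1 = i := by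
          rcases hr with (⟨h1, h2, h3⟩ | ⟨h1, h2, h3⟩) | (⟨h1, h2, h3⟩ | ⟨h1, h2, h3⟩) <;>
            first | exact h1.symm | exact h1 | omega
        exact this ▸ hu
  · intro h v
    obtain ⟨i, j⟩ := v
    by_cases hj : j = 0
    · obtain ⟨j', hj', hm⟩ := (h i).2
      refine ⟨(i, j'), hm, ?_⟩
      rw [firecracker, SimpleGraph.fromRel_adj]
      subst hj
      refine ⟨by simp [Ne, Prod.ext_iff, eq_comm, hj'], Or.inl (Or.inl ⟨rfl, by simp, ?_⟩)⟩
      simpa using fun hc => hj' (Fin.ext (by simpa using hc))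
    · refine ⟨(i, 0), (h i).1, ?_⟩
      rw [firecracker, SimpleGraph.fromRel_adj]
      refine ⟨by simp [Ne, Prod.ext_iff, hj], Or.inr (Or.inl ⟨rfl, by simp, ?_⟩)⟩
      simpa using fun hc => hj (Fin.ext (by simpa using hc))

lemma sum_pow_card {α : Type*} [DecidableEq α] (s : Finset α) :
    ∑ t ∈ s.powerset, (X : ℂ[X]) ^ t.card = (X + 1) ^ s.card := by
  have h := Finset.prod_add (fun _ : α => (X : ℂ[X])) (fun _ => 1) s
  simp only [prod_const, one_pow, mul_one] at h
  exact h.symm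

lemma stepC (m : ℕ) :
    ∑ s ∈ (univ : Finset (Finset (Fin (m+3)))).filter
        (fun s => (0 : Fin (m+3)) ∈ s ∧ ∃ j ∈ s, j ≠ 0), (X : ℂ[X]) ^ s.card
      = X * (X + 1) ^ (m + 2) - X := by
  have hA : (univ : Finset (Finset (Fin (m+3)))).filter
      (fun s => (0 : Fin (m+3)) ∈ s ∧ ∃ j ∈ s, j ≠ 0)
      = ((univ : Finset (Finset (Fin (m+3)))).filter (fun s => (0 : Fin (m+3)) ∈ s)).erase {0} := by
    ext s
    simp only [mem_filter, mem_univ, true_and, mem_erase]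
    constructor
    · rintro ⟨h0, j, hj, hj0⟩
      refine ⟨fun hc => hj0 ?_, h0⟩
      · rw [hc] at hj; simpa using hj
    · rintro ⟨hne, h0⟩
      refine ⟨h0, ?_⟩
      by_contra hc
      push_neg at hc
      apply hne
      ext x
      simp only [mem_singleton]
      constructor
      · intro hx; by_contra hx0; exact hx0 (hc x hx)
      · rintro rfl; exact h0
  rw [hA, Finset.sum_erase_eq_sub (by simp)]
  have h1 : ∑ s ∈ (univ : Finset (Finset (Fin (m+3)))).filter (fun s => (0 : Fin (m+3)) ∈ s),
      (X : ℂ[X]) ^ s.card = X * (X + 1) ^ (m + 2) := by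
    rw [Finset.sum_nbij' (i := fun s => s.erase 0) (j := fun t => insert 0 t)
      (t := ((univ : Finset (Fin (m+3))).erase 0).powerset)
      (g := fun t => (X : ℂ[X]) ^ (t.card + 1))]
    · simp only [pow_succ, ← Finset.sum_mul, sum_pow_card]
      have hc : ((univ : Finset (Fin (m+3))).erase 0).card = m + 2 := by
        rw [Finset.card_erase_of_mem (mem_univ _), card_univ, Fintype.card_fin]; omega
      rw [hc]; ring
    · intro s hs; simp only [mem_filter, mem_univ, true_and] at hs
      simp only [mem_powerset]
      intro x hx; simp only [mem_erase] at hx ⊢; exact ⟨hx.1, mem_univ x⟩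
    · intro t ht; simp
    · intro s hs; simp only [mem_filter, mem_univ, true_and] at hs
      exact Finset.insert_erase hs
    · intro t ht; simp only [mem_powerset] at ht
      apply Finset.erase_insert
      intro hc; have := ht hc; simp at this
    · intro s hs; simp only [mem_filter, mem_univ, true_and] at hs
      rw [Finset.card_erase_of_mem hs]
      congr 1
      have : 1 ≤ s.card := Finset.card_pos.mpr ⟨0, hs⟩
      omega
  rw [h1]
  congr 1
  simp

lemma card_split {n K : ℕ} (D : Finset (Fin n × Fin K)) :
    D.card = ∑ i : Fin n, ((univ : Finset (Fin K)).filter (fun j => (i, j) ∈ D)).card := by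
  rw [Finset.card_eq_sum_card_fiberwise (f := Prod.fst) (t := univ) (fun x _ => mem_univ _)]
  refine Finset.sum_congr rfl fun i _ => ?_
  refine Finset.card_nbij' (fun p => p.2) (fun j => (i, j)) ?_ ?_ ?_ ?_
  · rintro ⟨a, b⟩ hp; simp only [Finset.mem_coe, mem_filter] at hp ⊢
    obtain ⟨h1, h2⟩ := hp; subst h2; exact ⟨mem_univ _, h1⟩
  · intro j hj
    simp only [Finset.mem_coe, mem_filter, mem_univ, true_and] at hj ⊢
    simp [hj]
  · rintro ⟨a, b⟩ hp; simp only [Finset.mem_coe, mem_filter] at hp; rw [hp.2]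
  · intro j hj; rfl

lemma stepB {n m : ℕ} [DecidablePred fun D : Finset (Fin n × Fin (m+3)) =>
      ∀ i : Fin n, (i, (0 : Fin (m+3))) ∈ D ∧ ∃ j : Fin (m+3), j ≠ 0 ∧ (i, j) ∈ D]
    [DecidablePred fun s : Finset (Fin (m+3)) => (0 : Fin (m+3)) ∈ s ∧ ∃ j ∈ s, j ≠ 0]
    :
    ∑ D ∈ (univ : Finset (Finset (Fin n × Fin (m+3)))).filter
        (fun D => ∀ i : Fin n, (i, (0 : Fin (m+3))) ∈ D ∧ ∃ j : Fin (m+3), j ≠ 0 ∧ (i, j) ∈ D),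
      (X : ℂ[X]) ^ D.card
    = (∑ s ∈ (univ : Finset (Finset (Fin (m+3)))).filter
        (fun s => (0 : Fin (m+3)) ∈ s ∧ ∃ j ∈ s, j ≠ 0), (X : ℂ[X]) ^ s.card) ^ n := by
  classical
  conv_rhs => rw [← Fintype.card_fin n, ← Finset.card_univ, ← Finset.prod_const,
    Finset.prod_univ_sum]
  refine Finset.sum_nbij' (fun D i => (univ : Finset (Fin (m+3))).filter (fun j => (i, j) ∈ D))
    (fun g => (univ : Finset (Fin n × Fin (m+3))).filter (fun p => p.2 ∈ g p.1)) ?_ ?_ ?_ ?_ ?_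
  · intro D hD
    simp only [mem_filter, mem_univ, true_and] at hD
    rw [Fintype.mem_piFinset]
    intro i
    obtain ⟨h0, j, hj, hjD⟩ := hD i
    simp only [mem_filter, mem_univ, true_and]
    exact ⟨h0, j, hjD, hj⟩
  · intro g hg
    rw [Fintype.mem_piFinset] at hg
    simp only [mem_filter, mem_univ, true_and]
    intro i
    have := hg i
    simp only [mem_filter, mem_univ, true_and] at this
    obtain ⟨h0, j, hjg, hj⟩ := this
    exact ⟨by simpa using h0, j, hj, by simpa using hjg⟩
  · intro D hD; ext ⟨a, b⟩; simp
  · intro g hg; funext i; ext j; simp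
  · intro D hD
    have h1 := Finset.prod_pow_eq_pow_sum (univ : Finset (Fin n))
      (fun i => #(filter (fun j => (i, j) ∈ D) univ)) (X : ℂ[X])
    rw [h1, ← card_split D]
    all_goals exact 0

end FireAux

open Finset FireAux in
/-- For `n ≥ 1` and `k ≥ 3`, `D_t(F(n,k), x) = (x(x+1)^{k-1} - x)^n`. -/
theorem stmt_5 (n k : ℕ) (hn : 1 ≤ n) (hk : 3 ≤ k) :
    (firecracker n k).DtPoly = (X * (X + 1) ^ (k - 1) - X) ^ n := by
  classical
  obtain ⟨m, rfl⟩ : ∃ m, k = m + 3 := ⟨k - 3, by omega⟩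
  have hk1 : m + 3 - 1 = m + 2 := by omega
  rw [hk1]
  -- the finset of total dominating sets
  set T : Finset (Finset (Fin n × Fin (m+3))) :=
    (univ : Finset (Finset (Fin n × Fin (m+3)))).filter
      (fun D => ∀ i : Fin n, (i, (0 : Fin (m+3))) ∈ D ∧ ∃ j : Fin (m+3), j ≠ 0 ∧ (i, j) ∈ D)
    with hT
  have hdt : ∀ i, (firecracker n (m+3)).dt i
      = (T.filter (fun D => D.card = i)).card := by
    intro i
    rw [SimpleGraph.dt, ← Set.ncard_coe_finset]
    congr 1
    ext D
    simp only [Set.mem_setOf_eq, Finset.coe_filter, hT, mem_filter, mem_univ, true_and,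
      tds_iff n m D]
    tauto
  have hmem : ∀ D ∈ T, D.card ∈ Finset.Icc 1 (Fintype.card (Fin n × Fin (m+3))) := by
    intro D hD
    rw [hT, mem_filter] at hD
    rw [mem_Icc]
    constructor
    · refine Finset.card_pos.mpr ⟨(⟨0, hn⟩, 0), (hD.2 ⟨0, hn⟩).1⟩
    · exact (Finset.card_le_univ D).trans_eq Finset.card_univ
  calc (firecracker n (m+3)).DtPoly
      = ∑ i ∈ Finset.Icc 1 (Fintype.card (Fin n × Fin (m+3))),
          ∑ D ∈ T.filter (fun D => D.card = i), (X : ℂ[X]) ^ D.card := by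
        rw [SimpleGraph.DtPoly]
        refine Finset.sum_congr rfl fun i _ => ?_
        have h2 : ∑ D ∈ T.filter (fun D => D.card = i), (X : ℂ[X]) ^ D.card
            = ∑ _D ∈ T.filter (fun D => D.card = i), (X : ℂ[X]) ^ i :=
          Finset.sum_congr rfl fun D hD => by rw [(Finset.mem_filter.mp hD).2]
        rw [h2, Finset.sum_const, nsmul_eq_mul, hdt i]
        simp
    _ = ∑ D ∈ T, (X : ℂ[X]) ^ D.card :=
        Finset.sum_fiberwise_of_maps_to hmem _
    _ = (X * (X + 1) ^ (m + 2) - X) ^ n := by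
        rw [hT, stepB, stepC]
end

section
/- Let n ≥ 1 and let k_1, k_2, …, k_n be natural numbers with k_i ≥ 3 for all i. Then the total domination polynomial of the generalized firecracker graph satisfies D_t(F(k_1,…,k_n),x) = Π_{i=1}^{n} (x(x+1)^{k_i−1} − x). -/
open Polynomial

/-- The generalized firecracker `F(k₁,…,kₙ)`: disjoint copies of the stars `S_{kᵢ}`
(in copy `i`, vertex `⟨i,0⟩` is the center, adjacent to the leaves `⟨i,j⟩`, `j ≠ 0`),
concatenated by joining the chosen leaf `⟨i,1⟩` of copy `i` to the chosen leaf
`⟨i+1,1⟩` of copy `i+1`. -/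
def genFirecracker (n : ℕ) (k : Fin n → ℕ) : SimpleGraph ((i : Fin n) × Fin (k i)) :=
  SimpleGraph.fromRel (fun a b =>
    ((a.1 : ℕ) = (b.1 : ℕ) ∧ (a.2 : ℕ) = 0 ∧ (b.2 : ℕ) ≠ 0) ∨
    ((a.1 : ℕ) + 1 = (b.1 : ℕ) ∧ (a.2 : ℕ) = 1 ∧ (b.2 : ℕ) = 1))

open Polynomial Finset

section aux

variable {n : ℕ} {k : Fin n → ℕ}

lemma sig_ext {a b : (i : Fin n) × Fin (k i)} (h1 : (a.1 : ℕ) = (b.1 : ℕ))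
    (h2 : (a.2 : ℕ) = (b.2 : ℕ)) : a = b := by
  obtain ⟨a1, a2⟩ := a
  obtain ⟨b1, b2⟩ := b
  simp only at h1 h2
  have : a1 = b1 := Fin.ext h1
  subst this
  have : a2 = b2 := Fin.ext h2
  subst this
  rfl

lemma genFirecracker_adj (a b : (i : Fin n) × Fin (k i)) :
    (genFirecracker n k).Adj a b ↔ a ≠ b ∧
      ((((a.1 : ℕ) = (b.1 : ℕ) ∧ (a.2 : ℕ) = 0 ∧ (b.2 : ℕ) ≠ 0) ∨
        ((a.1 : ℕ) + 1 = (b.1 : ℕ) ∧ (a.2 : ℕ) = 1 ∧ (b.2 : ℕ) = 1)) ∨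
       (((b.1 : ℕ) = (a.1 : ℕ) ∧ (b.2 : ℕ) = 0 ∧ (a.2 : ℕ) ≠ 0) ∨
        ((b.1 : ℕ) + 1 = (a.1 : ℕ) ∧ (b.2 : ℕ) = 1 ∧ (a.2 : ℕ) = 1))) := by
  simp [genFirecracker, SimpleGraph.fromRel_adj]

lemma tds_iff (hk : ∀ i, 3 ≤ k i) (D : Finset ((i : Fin n) × Fin (k i))) :
    (genFirecracker n k).IsTDS D ↔ ∀ i : Fin n,
      (⟨i, ⟨0, by have := hk i; omega⟩⟩ : (i : Fin n) × Fin (k i)) ∈ D ∧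
      ∃ j : Fin (k i), (j : ℕ) ≠ 0 ∧ ⟨i, j⟩ ∈ D := by
  constructor
  · intro hD i
    constructor
    · -- the leaf ⟨i,2⟩ forces the center into D
      obtain ⟨u, huD, hadj⟩ := hD ⟨i, ⟨2, by have := hk i; omega⟩⟩
      rw [genFirecracker_adj] at hadj
      obtain ⟨-, h⟩ := hadj
      have : u = ⟨i, ⟨0, by have := hk i; omega⟩⟩ := by
        rcases h with (h | h) | (h | h) <;> simp only at h
        · omega
        · omega
        · exact sig_ext h.1 h.2.1
        · omega
      rwa [this] at huD
    · -- the center has a neighbor in D, which is a leaf of star i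
      obtain ⟨u, huD, hadj⟩ := hD ⟨i, ⟨0, by have := hk i; omega⟩⟩
      rw [genFirecracker_adj] at hadj
      obtain ⟨-, h⟩ := hadj
      obtain ⟨u1, u2⟩ := u
      have h1 : u1 = i ∧ (u2 : ℕ) ≠ 0 := by
        rcases h with (h | h) | (h | h) <;> simp only at h
        · exact ⟨(Fin.ext h.1.symm), h.2.2⟩
        · omega
        · omega
        · omega
      obtain ⟨h1, h2⟩ := h1
      subst h1
      exact ⟨u2, h2, huD⟩
  · intro hD v
    obtain ⟨i, j⟩ := v
    by_cases hj : (j : ℕ) = 0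
    · obtain ⟨-, j', hj', hmem⟩ := hD i
      refine ⟨⟨i, j'⟩, hmem, ?_⟩
      rw [genFirecracker_adj]
      refine ⟨?_, Or.inl (Or.inl ⟨rfl, hj, hj'⟩)⟩
      intro h
      have := congrArg (fun x => (x.2 : ℕ)) h
      simp only at this
      omega
    · obtain ⟨hc, -⟩ := hD i
      refine ⟨_, hc, ?_⟩
      rw [genFirecracker_adj]
      refine ⟨?_, Or.inr (Or.inl ⟨rfl, rfl, hj⟩)⟩
      intro h
      have := congrArg (fun x => (x.2 : ℕ)) h
      simp only at this
      omega

end aux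

/-- subsets of `Fin m` containing `0` and some nonzero element -/
def goodSets (m : ℕ) (hm : 0 < m) : Finset (Finset (Fin m)) :=
  Finset.univ.filter (fun S => (⟨0, hm⟩ : Fin m) ∈ S ∧ ∃ j : Fin m, (j : ℕ) ≠ 0 ∧ j ∈ S)

lemma sum_powerset_pow_card (s : Finset (Fin m)) :
    ∑ t ∈ s.powerset, (X : ℂ[X]) ^ t.card = (X + 1) ^ s.card := by
  have := Finset.prod_add (fun _ : Fin m => (X : ℂ[X])) (fun _ => 1) s
  simp only [Finset.prod_const, Finset.prod_const_one, mul_one, one_pow] at this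
  rw [← this]

lemma goodSets_sum (m : ℕ) (hm : 3 ≤ m) :
    ∑ S ∈ goodSets m (by omega), (X : ℂ[X]) ^ S.card = X * (X + 1) ^ (m - 1) - X := by
  have h0 : 0 < m := by omega
  set z : Fin m := ⟨0, h0⟩ with hz
  -- sum over sets containing z
  have hA : ∑ S ∈ Finset.univ.filter (fun S : Finset (Fin m) => z ∈ S), (X : ℂ[X]) ^ S.card
      = X * (X + 1) ^ (m - 1) := by
    rw [show X * ((X:ℂ[X]) + 1) ^ (m-1) = ∑ t ∈ (Finset.univ.erase z).powerset, X * X ^ t.card by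
      rw [← Finset.mul_sum, sum_powerset_pow_card, Finset.card_erase_of_mem (Finset.mem_univ z),
        Finset.card_univ, Fintype.card_fin]]
    refine Finset.sum_nbij' (fun S => S.erase z) (fun t => insert z t) ?_ ?_ ?_ ?_ ?_
    · intro S hS
      simp only [Finset.mem_powerset]
      intro x hx
      simp only [Finset.mem_erase] at hx ⊢
      exact ⟨hx.1, Finset.mem_univ x⟩
    · intro t ht
      simp [Finset.mem_insert]
    · intro S hS
      simp only [Finset.mem_filter] at hS
      exact Finset.insert_erase hS.2
    · intro t ht
      simp only [Finset.mem_powerset] at ht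
      have : z ∉ t := fun h => by simpa using (ht h)
      exact Finset.erase_insert this
    · intro S hS
      simp only [Finset.mem_filter] at hS
      rw [Finset.card_erase_of_mem hS.2, ← pow_succ']
      congr 1
      have : 1 ≤ S.card := Finset.card_pos.mpr ⟨z, hS.2⟩
      omega
  -- the filter splits
  have hsplit : Finset.univ.filter (fun S : Finset (Fin m) => z ∈ S)
      = insert ({z} : Finset (Fin m)) (goodSets m h0) := by
    ext S
    simp only [Finset.mem_filter, Finset.mem_univ, true_and, Finset.mem_insert, goodSets]
    constructor
    · intro hzS
      by_cases h : ∃ j : Fin m, (j : ℕ) ≠ 0 ∧ j ∈ S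
      · exact Or.inr ⟨hzS, h⟩
      · push_neg at h
        left
        ext x
        simp only [Finset.mem_singleton]
        constructor
        · intro hx
          by_cases hx0 : (x : ℕ) = 0
          · exact Fin.ext hx0
          · exact absurd hx (h x hx0)
        · rintro rfl; exact hzS
    · rintro (rfl | ⟨h1, -⟩)
      · exact Finset.mem_singleton_self z
      · exact h1
  have hnot : ({z} : Finset (Fin m)) ∉ goodSets m h0 := by
    intro hmem
    simp only [goodSets, Finset.mem_filter] at hmem
    obtain ⟨-, -, j, hj, hjz⟩ := hmem
    rw [Finset.mem_singleton] at hjz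
    rw [hjz, hz] at hj
    exact hj rfl
  rw [hsplit, Finset.sum_insert hnot] at hA
  simp only [Finset.card_singleton, pow_one] at hA
  linear_combination hA

/-- For `n ≥ 1` and `kᵢ ≥ 3` for all `i`,
`D_t(F(k₁,…,kₙ), x) = Π_{i=1}^{n} (x(x+1)^{kᵢ-1} - x)`. -/
theorem stmt_6 (n : ℕ) (k : Fin n → ℕ) (hn : 1 ≤ n) (hk : ∀ i, 3 ≤ k i) :
    (genFirecracker n k).DtPoly = ∏ i : Fin n, (X * (X + 1) ^ (k i - 1) - X) := by
  classical
  set G := genFirecracker n k with hG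
  haveI hne : Nonempty ((i : Fin n) × Fin (k i)) :=
    ⟨⟨⟨0, hn⟩, ⟨0, by have := hk ⟨0, hn⟩; omega⟩⟩⟩
  set T : Finset (Finset ((i : Fin n) × Fin (k i))) :=
    Finset.univ.filter (fun D => G.IsTDS D) with hT
  -- Step 1: DtPoly = ∑ over TDS of X^card
  have step1 : G.DtPoly = ∑ D ∈ T, (X : ℂ[X]) ^ D.card := by
    have hmap : ∀ D ∈ T, D.card ∈ Finset.Icc 1 (Fintype.card ((i : Fin n) × Fin (k i))) := by
      intro D hD
      simp only [hT, Finset.mem_filter] at hD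
      rw [Finset.mem_Icc]
      refine ⟨?_, Finset.card_le_univ D⟩
      obtain ⟨v⟩ := hne
      obtain ⟨u, hu, -⟩ := hD.2 v
      exact Finset.card_pos.mpr ⟨u, hu⟩
    rw [← Finset.sum_fiberwise_of_maps_to hmap (fun D => (X:ℂ[X]) ^ D.card)]
    unfold SimpleGraph.DtPoly
    refine Finset.sum_congr rfl (fun i hi => ?_)
    have hdt : G.dt i = (T.filter (fun D => D.card = i)).card := by
      unfold SimpleGraph.dt
      rw [← Set.ncard_coe_finset]
      congr 1
      ext D
      simp only [Finset.coe_filter, Set.mem_setOf_eq, hT, Finset.mem_filter, Finset.mem_univ,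
        true_and]
      tauto
    rw [hdt]
    rw [show ∑ D ∈ T.filter (fun D => D.card = i), (X:ℂ[X]) ^ D.card
        = ∑ D ∈ T.filter (fun D => D.card = i), (X:ℂ[X]) ^ i from
      Finset.sum_congr rfl (fun D hD => by rw [(Finset.mem_filter.mp hD).2])]
    rw [Finset.sum_const, nsmul_eq_mul]
    simp
  rw [step1]
  -- Step 2: reindex by pi-type
  have h0 : ∀ i : Fin n, 0 < k i := fun i => by have := hk i; omega
  have step2 : ∑ D ∈ T, (X : ℂ[X]) ^ D.card
      = ∑ f ∈ Fintype.piFinset (fun i => goodSets (k i) (h0 i)),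
          ∏ i : Fin n, (X : ℂ[X]) ^ (f i).card := by
    refine Finset.sum_nbij'
      (fun D => fun i => Finset.univ.filter (fun j => (⟨i, j⟩ : (i : Fin n) × Fin (k i)) ∈ D))
      (fun f => Finset.univ.sigma f) ?_ ?_ ?_ ?_ ?_
    · intro D hD
      simp only [hT, Finset.mem_filter, Finset.mem_univ, true_and] at hD
      rw [tds_iff hk] at hD
      rw [Fintype.mem_piFinset]
      intro i
      obtain ⟨hc, j, hj, hjD⟩ := hD i
      simp only [goodSets, Finset.mem_filter, Finset.mem_univ, true_and]
      exact ⟨by simpa using hc, j, hj, by simpa using hjD⟩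
    · intro f hf
      rw [Fintype.mem_piFinset] at hf
      simp only [hT, Finset.mem_filter, Finset.mem_univ, true_and]
      rw [tds_iff hk]
      intro i
      have := hf i
      simp only [goodSets, Finset.mem_filter, Finset.mem_univ, true_and] at this
      obtain ⟨hc, j, hj, hjf⟩ := this
      exact ⟨by simp [Finset.mem_sigma]; exact hc, j, hj, by simp [Finset.mem_sigma]; exact hjf⟩
    · intro D hD
      ext ⟨i, j⟩
      simp [Finset.mem_sigma]
    · intro f hf
      funext i
      ext j
      simp [Finset.mem_sigma]
    · intro D hD
      rw [Finset.prod_pow_eq_pow_sum]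
      congr 1
      conv_lhs => rw [show D = Finset.univ.sigma
        (fun i => Finset.univ.filter (fun j => (⟨i, j⟩ : (i : Fin n) × Fin (k i)) ∈ D)) by
          ext ⟨i, j⟩; simp [Finset.mem_sigma]]
      rw [Finset.card_sigma]
  have h3 := Finset.prod_univ_sum (fun i => goodSets (k i) (h0 i))
    (fun (i : Fin n) (S : Finset (Fin (k i))) => (X : ℂ[X]) ^ S.card)
  rw [step2, ← h3]
  exact Finset.prod_congr rfl (fun i _ => goodSets_sum (k i) (hk i))
end

section
/- Let G = (V,E) be a finite simple graph with no isolated vertices. A vertex v ∈ V is an essential vertex of G (i.e., D_t(G∖v,x) is the zero polynomial) if and only if v is a support vertex of G. -/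
open Polynomial

lemma dtpoly_eq_zero_iff' {W : Type*} [Fintype W] [Nonempty W] (H : SimpleGraph W) :
    H.DtPoly = 0 ↔ ¬ ∃ D : Finset W, H.IsTDS D := by
  constructor
  · rintro hz ⟨D, hD⟩
    have hne : D.Nonempty := by
      obtain ⟨w⟩ := ‹Nonempty W›
      obtain ⟨u, hu, _⟩ := hD w
      exact ⟨u, hu⟩
    have h1 : 1 ≤ D.card := Finset.card_pos.mpr hne
    have h2 : D.card ≤ Fintype.card W := Finset.card_le_univ D
    have hc := congrArg (fun p => p.coeff D.card) hz
    simp only [SimpleGraph.DtPoly, Polynomial.finset_sum_coeff, Polynomial.coeff_C_mul,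
      Polynomial.coeff_X_pow, Polynomial.coeff_zero, mul_ite, mul_one, mul_zero] at hc
    rw [Finset.sum_ite_eq (Finset.Icc 1 (Fintype.card W)) D.card (fun i => (H.dt i : ℂ)),
      if_pos (Finset.mem_Icc.mpr ⟨h1, h2⟩)] at hc
    have hdt : H.dt D.card = 0 := by exact_mod_cast hc
    have hmem : D ∈ {D' : Finset W | D'.card = D.card ∧ H.IsTDS D'} := ⟨rfl, hD⟩
    have hpos : 0 < Set.ncard {D' : Finset W | D'.card = D.card ∧ H.IsTDS D'} :=
      (Set.ncard_pos (Set.toFinite _)).mpr ⟨D, hmem⟩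
    rw [SimpleGraph.dt] at hdt
    omega
  · intro hno
    apply Finset.sum_eq_zero
    intro i _
    have : {D : Finset W | D.card = i ∧ H.IsTDS D} = ∅ := by
      ext D; simp only [Set.mem_setOf_eq, Set.mem_empty_iff_false, iff_false, not_and]
      intro _ hD; exact hno ⟨D, hD⟩
    rw [SimpleGraph.dt, this, Set.ncard_empty]
    simp

/-- In a graph with no isolated vertices, a vertex `v` is essential
(`D_t(G∖v, x) = 0`) if and only if `v` is a support vertex of `G`. -/
theorem stmt_7 {V : Type*} [Fintype V] [DecidableEq V] (G : SimpleGraph V)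
    (h : ∀ v, ∃ u, G.Adj v u) (v : V) :
    (G.induce {u | u ≠ v}).DtPoly = 0 ↔ G.IsSupportVertex v := by
  haveI : Nonempty {u | u ≠ v} := by
    obtain ⟨u, hu⟩ := h v
    exact ⟨⟨u, hu.ne'⟩⟩
  rw [dtpoly_eq_zero_iff']
  constructor
  · intro hno
    by_contra hns
    apply hno
    refine ⟨Finset.univ, fun w => ?_⟩
    by_contra hcon
    push_neg at hcon
    apply hns
    obtain ⟨u, hu⟩ := h w.1
    have huv : u = v := by
      by_contra hne
      exact hcon ⟨u, hne⟩ (Finset.mem_univ _) hu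
    subst huv
    refine ⟨w.1, hu.symm, ?_⟩
    ext x
    simp only [SimpleGraph.mem_neighborSet, Set.mem_singleton_iff]
    constructor
    · intro hx
      by_contra hxv
      exact hcon ⟨x, hxv⟩ (Finset.mem_univ _) hx
    · rintro rfl; exact hu
  · rintro ⟨l, hvl, hl⟩ ⟨D, hD⟩
    obtain ⟨u, -, hadj⟩ := hD ⟨l, hvl.ne'⟩
    have : u.1 ∈ G.neighborSet l := hadj
    rw [hl] at this
    exact u.2 this
end

section
/- Let G = (V,E) be a finite simple graph and let v be a support vertex of G. Then D_t(G,x) = D_t(G⊙v,x), where G⊙v is the graph obtained from G by removing all edges joining two vertices of N(v). -/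
open Polynomial

/-- If `v` is a support vertex of `G`, then `D_t(G,x) = D_t(G⊙v, x)`, where `G⊙v` is
obtained from `G` by deleting every edge both of whose endpoints lie in `N(v)`. -/
theorem stmt_8 {V : Type*} [Fintype V] (G : SimpleGraph V) (v : V)
    (hv : G.IsSupportVertex v) :
    G.DtPoly = (G.deleteEdges {e : Sym2 V | ∀ x ∈ e, G.Adj v x}).DtPoly := by
  obtain ⟨l, hvl, hNl⟩ := hv
  set G' := G.deleteEdges {e : Sym2 V | ∀ x ∈ e, G.Adj v x} with hG'
  have key : ∀ D : Finset V, G.IsTDS D ↔ G'.IsTDS D := by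
    intro D
    constructor
    · intro h x
      have hvD : v ∈ D := by
        obtain ⟨u, hu, hadj⟩ := h l
        have hmem : u ∈ G.neighborSet l := hadj
        rw [hNl, Set.mem_singleton_iff] at hmem
        rwa [hmem] at hu
      obtain ⟨u, hu, hadj⟩ := h x
      by_cases hc : G.Adj v x ∧ G.Adj v u
      · refine ⟨v, hvD, ?_⟩
        rw [SimpleGraph.deleteEdges_adj]
        refine ⟨hc.1.symm, ?_⟩
        simp only [Set.mem_setOf_eq]
        intro hall
        exact G.irrefl (hall v (by simp [Sym2.mem_iff]))
      · refine ⟨u, hu, ?_⟩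
        rw [SimpleGraph.deleteEdges_adj]
        refine ⟨hadj, ?_⟩
        intro hall
        exact hc ⟨hall x (by simp [Sym2.mem_iff]), hall u (by simp [Sym2.mem_iff])⟩
    · intro h x
      obtain ⟨u, hu, hadj⟩ := h x
      exact ⟨u, hu, (SimpleGraph.deleteEdges_adj.mp hadj).1⟩
  have hdt : ∀ i, G.dt i = G'.dt i := by
    intro i
    unfold SimpleGraph.dt
    congr 1
    ext D
    simp [key D]
  unfold SimpleGraph.DtPoly
  simp [hdt]
end

section
/- The total domination polynomial of the Petersen graph P satisfies D_t(P,x) = x^{10} + 10x^{9} + 45x^{8} + 110x^{7} + 140x^{6} + 72x^{5} + 10x^{4}. -/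
open Polynomial

/-- The Petersen graph, realized as the Kneser graph on the 2-element subsets of a
5-element set, two of them adjacent iff they are disjoint. -/
def petersen : SimpleGraph {s : Finset (Fin 5) // s.card = 2} where
  Adj a b := Disjoint (a : Finset (Fin 5)) (b : Finset (Fin 5))
  symm := ⟨fun a b h => h.symm⟩
  loopless := by
    constructor
    intro a h
    have h1 : (a : Finset (Fin 5)) = ∅ := disjoint_self.mp h
    have h2 := a.2
    rw [h1] at h2
    simp at h2

instance : DecidableRel petersen.Adj := fun a b =>
  inferInstanceAs (Decidable (Disjoint (a : Finset (Fin 5)) (b : Finset (Fin 5))))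

instance (D : Finset {s : Finset (Fin 5) // s.card = 2}) : Decidable (petersen.IsTDS D) :=
  inferInstanceAs (Decidable (∀ v, ∃ u ∈ D, petersen.Adj v u))

def petersenCnt (i : ℕ) : ℕ :=
  (Finset.univ.filter (fun D : Finset {s : Finset (Fin 5) // s.card = 2} =>
    D.card = i ∧ petersen.IsTDS D)).card

lemma petersen_dt_eq (i : ℕ) : petersen.dt i = petersenCnt i := by
  rw [SimpleGraph.dt, petersenCnt,
    show {D : Finset {s : Finset (Fin 5) // s.card = 2} | D.card = i ∧ petersen.IsTDS D}
      = ↑(Finset.univ.filter (fun D : Finset {s : Finset (Fin 5) // s.card = 2} =>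
          D.card = i ∧ petersen.IsTDS D)) by ext D; simp,
    Set.ncard_coe_finset]

set_option maxHeartbeats 4000000 in
set_option maxRecDepth 20000 in
lemma petersenCnt_vals : petersenCnt 0 = 0 ∧ petersenCnt 1 = 0 ∧ petersenCnt 2 = 0 ∧
    petersenCnt 3 = 0 ∧ petersenCnt 4 = 10 ∧ petersenCnt 5 = 72 ∧ petersenCnt 6 = 140 ∧
    petersenCnt 7 = 110 ∧ petersenCnt 8 = 45 ∧ petersenCnt 9 = 10 ∧ petersenCnt 10 = 1 := by
  decide

set_option maxRecDepth 20000 in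
lemma petersen_card : Fintype.card {s : Finset (Fin 5) // s.card = 2} = 10 := by decide

/-- The total domination polynomial of the Petersen graph is
`x¹⁰ + 10x⁹ + 45x⁸ + 110x⁷ + 140x⁶ + 72x⁵ + 10x⁴`. -/
theorem stmt_11 :
    petersen.DtPoly =
      X ^ 10 + 10 * X ^ 9 + 45 * X ^ 8 + 110 * X ^ 7 + 140 * X ^ 6 + 72 * X ^ 5 +
        10 * X ^ 4 := by
  have hv : ∀ i < 11, petersen.dt i = [0,0,0,0,10,72,140,110,45,10,1].getD i 0 := by
    intro i hi
    rw [petersen_dt_eq]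
    obtain ⟨h0,h1,h2,h3,h4,h5,h6,h7,h8,h9,h10⟩ := petersenCnt_vals
    interval_cases i
    exacts [h0, h1, h2, h3, h4, h5, h6, h7, h8, h9, h10]
  rw [SimpleGraph.DtPoly, petersen_card]
  rw [show Finset.Icc 1 10 = (Finset.range 11).erase 0 from by decide,
    Finset.sum_erase _ (by rw [hv 0 (by norm_num)]; simp)]
  simp only [Finset.sum_range_succ, Finset.sum_range_zero, hv 0 (by norm_num),
    hv 1 (by norm_num), hv 2 (by norm_num), hv 3 (by norm_num), hv 4 (by norm_num),
    hv 5 (by norm_num), hv 6 (by norm_num), hv 7 (by norm_num), hv 8 (by norm_num),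
    hv 9 (by norm_num), hv 10 (by norm_num), List.getD]
  simp only [map_ofNat, Polynomial.C_0, Polynomial.C_1, map_natCast]
  norm_num
  ring
end

section
/- Let G be a finite simple graph of order n. If the set of distinct complex roots of the total domination polynomial D_t(G,x) is exactly {−1, 0}, then G has at least two support vertices. -/
open Polynomial

section Aux

variable {V : Type*} [Fintype V] (G : SimpleGraph V)

lemma coeff_DtPoly (k : ℕ) :
    G.DtPoly.coeff k = if k ∈ Finset.Icc 1 (Fintype.card V) then (G.dt k : ℂ) else 0 := by
  classical
  rw [SimpleGraph.DtPoly, Polynomial.finset_sum_coeff]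
  simp only [Polynomial.coeff_C_mul, Polynomial.coeff_X_pow, mul_ite, mul_one, mul_zero]
  rw [Finset.sum_ite_eq (Finset.Icc 1 (Fintype.card V)) k (fun i => (G.dt i : ℂ))]

lemma dt_one : G.dt 1 = 0 := by
  classical
  have : {D : Finset V | D.card = 1 ∧ G.IsTDS D} = ∅ := by
    ext D
    simp only [Set.mem_setOf_eq, Set.mem_empty_iff_false, iff_false, not_and]
    rintro hD hT
    obtain ⟨v, hv⟩ := Finset.card_eq_one.mp hD
    obtain ⟨u, hu, hadj⟩ := hT v
    rw [hv, Finset.mem_singleton] at hu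
    subst hu
    exact G.irrefl hadj
  rw [SimpleGraph.dt, this, Set.ncard_empty]

lemma dt_zero_of_mem {i : ℕ} (hi : G.dt i ≠ 0) : ∃ D : Finset V, G.IsTDS D := by
  classical
  rw [SimpleGraph.dt] at hi
  have := Set.nonempty_of_ncard_ne_zero hi
  obtain ⟨D, hD⟩ := this
  exact ⟨D, hD.2⟩

end Aux

/-- If the set of distinct complex roots of `D_t(G,x)` is exactly `{-1, 0}`, then `G` has
at least two support vertices. -/
theorem stmt_14 {V : Type*} [Fintype V] (G : SimpleGraph V)
    (h : {z : ℂ | G.DtPoly.IsRoot z} = {-1, 0}) :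
    2 ≤ Set.ncard {w | G.IsSupportVertex w} := by
  classical
  set n := Fintype.card V with hn
  set p := G.DtPoly with hp
  -- p ≠ 0
  have hp0 : p ≠ 0 := by
    intro h0
    have h1 : (1 : ℂ) ∈ {z : ℂ | p.IsRoot z} := by
      simp [h0, Polynomial.IsRoot]
    rw [h] at h1
    norm_num [Set.mem_insert_iff] at h1
  -- there is a TDS
  have hTDS : ∃ D : Finset V, G.IsTDS D := by
    by_contra hno
    push_neg at hno
    apply hp0
    have : ∀ i, G.dt i = 0 := by
      intro i
      rw [SimpleGraph.dt]
      convert Set.ncard_empty (Finset V)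
      ext D
      simp only [Set.mem_setOf_eq, Set.mem_empty_iff_false, iff_false, not_and]
      exact fun _ => hno D
    rw [hp, SimpleGraph.DtPoly]
    apply Finset.sum_eq_zero
    intro i _
    simp [this i]
  obtain ⟨D₀, hD₀⟩ := hTDS
  -- every vertex has a neighbor
  have hnbr : ∀ v : V, ∃ u, G.Adj v u := by
    intro v
    obtain ⟨u, _, hadj⟩ := hD₀ v
    exact ⟨u, hadj⟩
  -- univ is a TDS
  have hunivTDS : G.IsTDS Finset.univ := by
    intro v
    obtain ⟨u, hu⟩ := hnbr v
    exact ⟨u, Finset.mem_univ u, hu⟩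
  -- dt n = 1
  have hdtn : G.dt n = 1 := by
    rw [SimpleGraph.dt]
    have : {D : Finset V | D.card = n ∧ G.IsTDS D} = {Finset.univ} := by
      ext D
      simp only [Set.mem_setOf_eq, Set.mem_singleton_iff]
      constructor
      · rintro ⟨hc, _⟩
        exact Finset.card_eq_iff_eq_univ D |>.mp hc
      · rintro rfl
        exact ⟨Finset.card_univ, hunivTDS⟩
    rw [this, Set.ncard_singleton]
  -- n ≥ 1
  have hn1 : 1 ≤ n := by
    by_contra hc
    push_neg at hc
    apply hp0
    rw [hp, SimpleGraph.DtPoly]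
    have he : Finset.Icc 1 (Fintype.card V) = ∅ := by
      apply Finset.Icc_eq_empty
      omega
    rw [he, Finset.sum_empty]
  -- coeff n = 1
  have hcoeffn : p.coeff n = 1 := by
    rw [hp, coeff_DtPoly, if_pos (by simp [Finset.mem_Icc]; omega), hdtn]
    norm_num
  have hdeg : p.natDegree = n := by
    apply le_antisymm
    · rw [hp, SimpleGraph.DtPoly]
      apply Polynomial.natDegree_sum_le_of_forall_le
      intro i hi
      apply le_trans (Polynomial.natDegree_C_mul_le _ _)
      rw [Polynomial.natDegree_X_pow]
      exact (Finset.mem_Icc.mp hi).2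
    · exact Polynomial.le_natDegree_of_ne_zero (by rw [hcoeffn]; exact one_ne_zero)
  have hmonic : p.Monic := by
    rw [Polynomial.Monic, Polynomial.leadingCoeff, hdeg, hcoeffn]
  have hsplits : p.Splits := IsAlgClosed.splits p
  have hroots_mem : ∀ z ∈ p.roots, z = 0 ∨ z = -1 := by
    intro z hz
    have hz1 := (Polynomial.mem_roots'.mp hz).2
    have hz2 : z ∈ ({-1, 0} : Set ℂ) := by rw [← h]; exact hz1
    rcases hz2 with hz2 | hz2
    · exact Or.inr hz2
    · exact Or.inl hz2
  set a := p.roots.count 0 with ha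
  set b := p.roots.count (-1) with hb
  have hroots_eq : p.roots = Multiset.replicate a 0 + Multiset.replicate b (-1) := by
    ext z
    rw [Multiset.count_add, Multiset.count_replicate, Multiset.count_replicate]
    by_cases h0 : z = 0
    · subst h0
      simp [show (0 : ℂ) ≠ -1 by norm_num, ha]
    by_cases h1 : z = -1
    · subst h1
      simp [show (-1 : ℂ) ≠ 0 by norm_num, hb]
    · have hzn : z ∉ p.roots := by
        intro hz
        rcases hroots_mem z hz with h' | h' <;> [exact h0 h'; exact h1 h']
      rw [Multiset.count_eq_zero_of_notMem hzn, if_neg (fun hh => h0 hh.symm),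
        if_neg (fun hh => h1 hh.symm)]
  have hfact : p = Polynomial.X ^ a * (Polynomial.X + 1) ^ b := by
    conv_lhs => rw [hsplits.eq_prod_roots_of_monic hmonic]
    rw [hroots_eq, Multiset.map_add, Multiset.prod_add, Multiset.map_replicate,
      Multiset.map_replicate, Multiset.prod_replicate, Multiset.prod_replicate]
    norm_num
  have hab : a + b = n := by
    have hc : p.roots.card = n := by
      rw [← hdeg]
      exact (Polynomial.splits_iff_card_roots.mp hsplits)
    rw [hroots_eq] at hc
    simpa using hc
  have hcoeff0 : p.coeff 0 = 0 := by
    rw [hp, coeff_DtPoly]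
    simp
  have hcoeff1 : p.coeff 1 = 0 := by
    rw [hp, coeff_DtPoly]
    simp [dt_one]
  have ha2 : 2 ≤ a := by
    by_contra hlt
    push_neg at hlt
    interval_cases a
    · rw [hfact, pow_zero, one_mul] at hcoeff0
      rw [Polynomial.coeff_X_add_one_pow] at hcoeff0
      simp at hcoeff0
    · rw [hfact, pow_one] at hcoeff1
      have hq : ((Polynomial.X : Polynomial ℂ) * ((Polynomial.X : Polynomial ℂ) + 1) ^ b).coeff 1 =
          (((Polynomial.X : Polynomial ℂ) + 1) ^ b).coeff 0 := by
        simpa only [pow_one, zero_add] using Polynomial.coeff_X_pow_mul (((Polynomial.X : Polynomial ℂ) + 1) ^ b) 1 0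
      rw [hq, Polynomial.coeff_X_add_one_pow] at hcoeff1
      simp at hcoeff1
  have hn2 : 2 ≤ n := by omega
  have hdtn1 : G.dt (n - 1) = b := by
    have hc1 : p.coeff (n - 1) = (G.dt (n - 1) : ℂ) := by
      rw [hp, coeff_DtPoly, if_pos]
      simp only [Finset.mem_Icc, ← hn]
      omega
    have hc2 : p.coeff (n - 1) = (b : ℂ) := by
      rw [hfact]
      rcases Nat.eq_zero_or_pos b with hb0 | hbpos
      · have han : a = n := by omega
        rw [hb0, pow_zero, mul_one, Polynomial.coeff_X_pow, if_neg (by omega)]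
        simp [hb0]
      · have hsplit : n - 1 = (b - 1) + a := by omega
        rw [hsplit, Polynomial.coeff_X_pow_mul, Polynomial.coeff_X_add_one_pow]
        have hch : b.choose (b - 1) = b := by
          rw [← Nat.choose_symm (Nat.sub_le b 1), Nat.sub_sub_self hbpos, Nat.choose_one_right]
        rw [hch]
    exact Nat.cast_injective (hc1.symm.trans hc2)
  -- counting non-support vertices
  have hset : {D : Finset V | D.card = n - 1 ∧ G.IsTDS D} =
      (fun v => Finset.univ.erase v) '' {v | ¬ G.IsSupportVertex v} := by
    ext D
    simp only [Set.mem_setOf_eq, Set.mem_image]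
    constructor
    · rintro ⟨hcard, hT⟩
      obtain ⟨v, hv⟩ : ∃ v, v ∉ D := by
        by_contra hcc
        push_neg at hcc
        have : D = Finset.univ := Finset.eq_univ_iff_forall.mpr hcc
        rw [this, Finset.card_univ, ← hn] at hcard
        omega
      have hDeq : D = Finset.univ.erase v := by
        apply Finset.eq_of_subset_of_card_le
        · intro x hx
          exact Finset.mem_erase.mpr ⟨fun hxv => hv (hxv ▸ hx), Finset.mem_univ x⟩
        · rw [Finset.card_erase_of_mem (Finset.mem_univ v), Finset.card_univ, ← hn, hcard]
      refine ⟨v, ?_, hDeq.symm⟩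
      rintro ⟨l, hadj, hNl⟩
      obtain ⟨u, hu, huadj⟩ := hT l
      have hmem : u ∈ G.neighborSet l := huadj
      rw [hNl] at hmem
      rw [hDeq] at hu
      exact (Finset.mem_erase.mp hu).1 hmem
    · rintro ⟨v, hv, rfl⟩
      refine ⟨?_, ?_⟩
      · rw [Finset.card_erase_of_mem (Finset.mem_univ v), Finset.card_univ, ← hn]
      · intro u
        have hex : ∃ w, G.Adj u w ∧ w ≠ v := by
          by_contra hc
          push_neg at hc
          obtain ⟨w, hw⟩ := hnbr u
          have hwv : w = v := hc w hw
          apply hv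
          refine ⟨u, ((hwv ▸ hw) : G.Adj u v).symm, ?_⟩
          ext x
          simp only [SimpleGraph.mem_neighborSet, Set.mem_singleton_iff]
          exact ⟨fun hx => hc x hx, fun hx => hx ▸ (hwv ▸ hw)⟩
        obtain ⟨w, hw, hne⟩ := hex
        exact ⟨w, Finset.mem_erase.mpr ⟨hne, Finset.mem_univ w⟩, hw⟩
  have hinj : Set.InjOn (fun v => Finset.univ.erase v) {v | ¬ G.IsSupportVertex v} := by
    intro x _ y _ he
    by_contra hne
    have hx : x ∈ Finset.univ.erase y := Finset.mem_erase.mpr ⟨hne, Finset.mem_univ x⟩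
    have he2 : Finset.univ.erase x = Finset.univ.erase y := he
    rw [← he2] at hx
    exact (Finset.mem_erase.mp hx).1 rfl
  have hcount : G.dt (n - 1) = Set.ncard {v | ¬ G.IsSupportVertex v} := by
    rw [SimpleGraph.dt, hset, Set.ncard_image_of_injOn hinj]
  have hcompl : Set.ncard {w | G.IsSupportVertex w} + Set.ncard {v | ¬ G.IsSupportVertex v} = n := by
    have hcc := Set.ncard_add_ncard_compl {w | G.IsSupportVertex w}
    rw [Set.compl_setOf] at hcc
    rw [hcc, Nat.card_eq_fintype_card, hn]
  omega
end

section
/- Let G be a finite simple graph of order n. If the set of distinct complex roots of the total domination polynomial D_t(G,x) is exactly {−2, 0}, then G is not 3-connected; that is, either G has at most 3 vertices, or there exists a set S of at most 2 vertices such that deleting S from G leaves a disconnected graph. -/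
open Polynomial

/-- If every set of cardinality `k` is a TDS, then `d_t(G,k)` is a binomial coefficient. -/
lemma dt_eq_choose_aux {V : Type*} [Fintype V] [DecidableEq V] (G : SimpleGraph V) (k : ℕ)
    (hk : ∀ D : Finset V, D.card = k → G.IsTDS D) :
    G.dt k = (Fintype.card V).choose k := by
  have hset : {D : Finset V | D.card = k ∧ G.IsTDS D}
      = ↑((Finset.univ : Finset V).powersetCard k) := by
    ext D
    simp only [Set.mem_setOf_eq, Finset.mem_coe, Finset.mem_powersetCard_univ]
    constructor
    · rintro ⟨h1, _⟩; exact h1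
    · intro h1; exact ⟨h1, hk D h1⟩
  rw [SimpleGraph.dt, hset, Set.ncard_coe_finset, Finset.card_powersetCard, Finset.card_univ]

lemma coeff_DtPoly_aux {V : Type*} [Fintype V] (G : SimpleGraph V) (k : ℕ) :
    G.DtPoly.coeff k =
      if k ∈ Finset.Icc 1 (Fintype.card V) then (G.dt k : ℂ) else 0 := by
  rw [SimpleGraph.DtPoly, Polynomial.finset_sum_coeff]
  simp only [Polynomial.coeff_C_mul, Polynomial.coeff_X_pow, mul_ite, mul_one, mul_zero]
  rw [Finset.sum_ite_eq (Finset.Icc 1 (Fintype.card V)) k (fun i => (G.dt i : ℂ))]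

lemma two_mul_choose_two (m : ℕ) : 2 * m.choose 2 = m * (m - 1) := by
  rw [Nat.choose_two_right]
  have h2 : 2 ∣ m * (m - 1) := by
    rcases Nat.even_or_odd m with he | ho
    · exact Dvd.dvd.mul_right he.two_dvd _
    · rcases m with _ | m
      · simp
      · have : Even (m.succ - 1) := by
          simpa using (Nat.Odd.sub_odd ho odd_one)
        exact Dvd.dvd.mul_left this.two_dvd _
  exact Nat.mul_div_cancel' h2

/-- If the set of distinct complex roots of `D_t(G,x)` is exactly `{-2, 0}`, then `G` is
not 3-connected: either `G` has at most 3 vertices, or some set of at most 2 vertices can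
be deleted so as to disconnect `G`. -/
theorem stmt_15 {V : Type*} [Fintype V] [DecidableEq V] (G : SimpleGraph V)
    (h : {z : ℂ | G.DtPoly.IsRoot z} = {-2, 0}) :
    Fintype.card V ≤ 3 ∨
      ∃ S : Finset V, S.card ≤ 2 ∧ ¬(G.induce ((S : Set V)ᶜ)).Connected := by
  classical
  by_contra hcon
  push_neg at hcon
  obtain ⟨hn3, hconn⟩ := hcon
  have hn4 : 4 ≤ Fintype.card V := hn3
  -- Step 1: minimum degree at least 3
  have hdeg : ∀ v : V, 3 ≤ (Finset.univ.filter (G.Adj v)).card := by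
    intro v
    by_contra hlt
    push_neg at hlt
    set S : Finset V := Finset.univ.filter (G.Adj v) with hS
    have hS2 : S.card ≤ 2 := by omega
    have hc := hconn S hS2
    have hv : v ∈ ((S : Set V)ᶜ) := by
      simp [hS, G.irrefl]
    have hcompl : 1 < (Sᶜ : Finset V).card := by
      have := Finset.card_compl S (α := V)
      omega
    obtain ⟨w, hwmem, hwv⟩ := Finset.exists_mem_ne hcompl v
    have hw : w ∈ ((S : Set V)ᶜ) := by simpa using hwmem
    obtain ⟨p⟩ := hc.preconnected ⟨v, hv⟩ ⟨w, hw⟩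
    have hne : (⟨v, hv⟩ : ((S : Set V)ᶜ : Set V)) ≠ ⟨w, hw⟩ := by
      intro he
      rw [Subtype.mk.injEq] at he
      exact hwv he.symm
    have hnil := SimpleGraph.Walk.not_nil_of_ne (p := p) hne
    have hadj := SimpleGraph.Walk.adj_snd (p := p) hnil
    have hadj' : G.Adj v (p.getVert 1).1 := hadj
    have hmem : (p.getVert 1).1 ∈ S := by
      simp [hS, hadj']
    have hnmem := (p.getVert 1).2
    simp only [Set.mem_compl_iff, Finset.mem_coe] at hnmem
    exact hnmem hmem
  -- Step 2: every large enough set is a TDS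
  have hTDS : ∀ D : Finset V, Fintype.card V - 2 ≤ D.card → G.IsTDS D := by
    intro D hD v
    have h3 := hdeg v
    set N : Finset V := Finset.univ.filter (G.Adj v) with hN
    have hcap : 1 ≤ (N ∩ D).card := by
      have h1 := Finset.card_inter_add_card_union N D
      have h2 : (N ∪ D).card ≤ Fintype.card V := Finset.card_le_univ _
      omega
    obtain ⟨u, hu⟩ := Finset.card_pos.mp hcap
    rw [Finset.mem_inter, hN, Finset.mem_filter] at hu
    exact ⟨u, hu.2, hu.1.2⟩
  have hdtn : ∀ k, Fintype.card V - 2 ≤ k → G.dt k = (Fintype.card V).choose k :=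
    fun k hk => dt_eq_choose_aux G k (fun D hD => hTDS D (hD ▸ hk))
  set n := Fintype.card V with hn
  set p := G.DtPoly with hp
  -- coefficient facts
  have hcn : p.coeff n = 1 := by
    rw [hp, coeff_DtPoly_aux, if_pos (Finset.mem_Icc.mpr ⟨by omega, le_rfl⟩),
      hdtn n (by omega), Nat.choose_self]
    norm_num
  have hcn1 : p.coeff (n - 1) = ((n.choose (n - 1) : ℕ) : ℂ) := by
    rw [hp, coeff_DtPoly_aux, if_pos (Finset.mem_Icc.mpr ⟨by omega, by omega⟩),
      hdtn (n - 1) (by omega)]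
  have hcn2 : p.coeff (n - 2) = ((n.choose (n - 2) : ℕ) : ℂ) := by
    rw [hp, coeff_DtPoly_aux, if_pos (Finset.mem_Icc.mpr ⟨by omega, by omega⟩),
      hdtn (n - 2) (by omega)]
  have hdeg_le : p.natDegree ≤ n := by
    rw [Polynomial.natDegree_le_iff_coeff_eq_zero]
    intro m hm
    rw [hp, coeff_DtPoly_aux, if_neg]
    intro hmem
    rw [Finset.mem_Icc] at hmem
    omega
  have hnd : p.natDegree = n :=
    le_antisymm hdeg_le (Polynomial.le_natDegree_of_ne_zero (by rw [hcn]; exact one_ne_zero))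
  have hp0 : p ≠ 0 := by
    intro h0
    rw [h0] at hcn
    simp at hcn
  have hmonic : p.Monic := by
    rw [Polynomial.Monic, Polynomial.leadingCoeff, hnd]
    exact hcn
  have hsp : p.Splits := IsAlgClosed.splits p
  have hcard : p.roots.card = n := by
    rw [← hnd]
    exact (Polynomial.splits_iff_card_roots.mp hsp)
  set a := p.roots.count (0 : ℂ) with ha
  set b := p.roots.count (-2 : ℂ) with hb
  have hmemr : ∀ z ∈ p.roots, z = -2 ∨ z = 0 := by
    intro z hz
    have hzr : z ∈ ({-2, 0} : Set ℂ) := by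
      rw [← h]
      exact Polynomial.isRoot_of_mem_roots hz
    simpa using hzr
  have hroot0 : (0 : ℂ) ∈ p.roots := by
    refine Polynomial.mem_roots'.mpr ⟨hp0, ?_⟩
    have : (0 : ℂ) ∈ {z : ℂ | p.IsRoot z} := by rw [h]; simp
    exact this
  have hroot2 : (-2 : ℂ) ∈ p.roots := by
    refine Polynomial.mem_roots'.mpr ⟨hp0, ?_⟩
    have : (-2 : ℂ) ∈ {z : ℂ | p.IsRoot z} := by rw [h]; simp
    exact this
  have ha1 : 1 ≤ a := Multiset.count_pos.mpr hroot0
  have hb1 : 1 ≤ b := Multiset.count_pos.mpr hroot2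
  have hM : p.roots = Multiset.replicate b (-2) + Multiset.replicate a 0 := by
    refine Multiset.ext.mpr fun z => ?_
    rw [Multiset.count_add, Multiset.count_replicate, Multiset.count_replicate]
    by_cases h2 : z = -2
    · subst h2
      rw [if_pos rfl, if_neg (by norm_num), add_zero]
    · by_cases h0 : z = 0
      · subst h0
        rw [if_neg (by norm_num), if_pos rfl, zero_add]
      · rw [if_neg (fun hh => h2 hh.symm), if_neg (fun hh => h0 hh.symm), add_zero]
        refine Multiset.count_eq_zero.mpr fun hz => ?_
        rcases hmemr z hz with h' | h' <;> [exact h2 h'; exact h0 h']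
  have hab : b + a = n := by
    rw [hM] at hcard
    simpa using hcard
  have hfac : p = (X + C (2 : ℂ)) ^ b * X ^ a := by
    have hprod := hsp.eq_prod_roots_of_monic hmonic
    rw [hM] at hprod
    simpa [Multiset.map_add, Multiset.map_replicate, Multiset.prod_replicate,
      Polynomial.C_neg, sub_neg_eq_add, sub_zero, Polynomial.C_0] using hprod
  -- extract the coefficient of degree n-1
  have key1 : ((n.choose (n - 1) : ℕ) : ℂ) = 2 ^ (b - (b - 1)) * (b.choose (b - 1) : ℂ) := by
    have hidx : (b - 1) + a = n - 1 := by omega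
    have := Polynomial.coeff_mul_X_pow ((X + C (2 : ℂ)) ^ b) a (b - 1)
    rw [← hfac, hidx, hcn1, Polynomial.coeff_X_add_C_pow] at this
    exact this
  have hbb : b - (b - 1) = 1 := by omega
  have hch1 : b.choose (b - 1) = b := by
    rw [Nat.choose_symm hb1, Nat.choose_one_right]
  rw [hbb, hch1] at key1
  have hnb : n.choose (n - 1) = 2 * b := by
    exact_mod_cast key1
  have hn2b : n = 2 * b := by
    rwa [Nat.choose_symm (by omega), Nat.choose_one_right] at hnb
  have hb2 : 2 ≤ b := by omega
  -- extract the coefficient of degree n-2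
  have key2 : ((n.choose (n - 2) : ℕ) : ℂ) = 2 ^ (b - (b - 2)) * (b.choose (b - 2) : ℂ) := by
    have hidx : (b - 2) + a = n - 2 := by omega
    have := Polynomial.coeff_mul_X_pow ((X + C (2 : ℂ)) ^ b) a (b - 2)
    rw [← hfac, hidx, hcn2, Polynomial.coeff_X_add_C_pow] at this
    exact this
  have hbb2 : b - (b - 2) = 2 := by omega
  have hch2 : b.choose (b - 2) = b.choose 2 := Nat.choose_symm hb2
  rw [hbb2, hch2] at key2
  have hnat2 : n.choose (n - 2) = 2 ^ 2 * b.choose 2 := by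
    exact_mod_cast key2
  rw [Nat.choose_symm (by omega)] at hnat2
  -- final arithmetic contradiction
  have e1 : 2 * n.choose 2 = n * (n - 1) := two_mul_choose_two n
  have e2 : 2 * b.choose 2 = b * (b - 1) := two_mul_choose_two b
  have efin : n * (n - 1) = 4 * (b * (b - 1)) := by
    calc n * (n - 1) = 2 * n.choose 2 := e1.symm
    _ = 2 * (2 ^ 2 * b.choose 2) := by rw [hnat2]
    _ = 4 * (2 * b.choose 2) := by ring
    _ = 4 * (b * (b - 1)) := by rw [e2]
  obtain ⟨c, hc⟩ : ∃ c, b = c + 2 := ⟨b - 2, by omega⟩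
  have efin2 : (2 * (c + 2)) * (2 * (c + 2) - 1) = 4 * ((c + 2) * ((c + 2) - 1)) := by
    rw [← hc, ← hn2b]
    exact efin
  have e3 : 2 * (c + 2) - 1 = 2 * c + 3 := by omega
  have e4 : (c + 2) - 1 = c + 1 := by omega
  rw [e3, e4] at efin2
  nlinarith [efin2]
end

section
/- Let H be any finite simple graph of order n ≥ 1. Then the total domination polynomial of the graph H(3) satisfies D_t(H(3),x) = x^{2n}(x+2)^n. -/
open Polynomial

/-- The graph `H(3)`: to each vertex `u` of `H` (realized as `(u,0)`) a path on the two
new vertices `(u,1)`, `(u,2)` is attached, via the edges `(u,0)(u,1)` and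
`(u,1)(u,2)`. -/
def attachP3 {W : Type*} (H : SimpleGraph W) : SimpleGraph (W × Fin 3) :=
  SimpleGraph.fromRel (fun a b =>
    ((a.2 : ℕ) = 0 ∧ (b.2 : ℕ) = 0 ∧ H.Adj a.1 b.1) ∨
    (a.1 = b.1 ∧ (((a.2 : ℕ) = 0 ∧ (b.2 : ℕ) = 1) ∨ ((a.2 : ℕ) = 1 ∧ (b.2 : ℕ) = 2))))

section Aux

open Finset

variable {V : Type*} [Fintype V] [DecidableEq V]

/-- General form: DtPoly as a sum over all total dominating sets, provided V is nonempty. -/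
lemma DtPoly_eq_sum_TDS (G : SimpleGraph V) [Nonempty V] [DecidablePred G.IsTDS] :
    G.DtPoly = ∑ D ∈ Finset.univ.filter G.IsTDS, (X : Polynomial ℂ) ^ D.card := by
  have hmem : ∀ D ∈ Finset.univ.filter G.IsTDS, D.card ∈ Finset.Icc 1 (Fintype.card V) := by
    intro D hD
    rw [Finset.mem_filter] at hD
    obtain ⟨v⟩ := ‹Nonempty V›
    obtain ⟨u, hu, -⟩ := hD.2 v
    simp only [Finset.mem_Icc]
    exact ⟨Finset.card_pos.2 ⟨u, hu⟩, by simpa using Finset.card_le_univ D⟩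
  rw [← Finset.sum_fiberwise_of_maps_to hmem (fun D => (X : Polynomial ℂ) ^ D.card)]
  unfold SimpleGraph.DtPoly
  refine Finset.sum_congr rfl fun i hi => ?_
  have hdt : G.dt i = ((Finset.univ.filter G.IsTDS).filter (fun D => D.card = i)).card := by
    unfold SimpleGraph.dt
    rw [Finset.filter_filter]
    have : {D : Finset V | D.card = i ∧ G.IsTDS D} =
        ↑(Finset.univ.filter (fun D => G.IsTDS D ∧ D.card = i)) := by
      ext D; simp [and_comm]
    rw [this, Set.ncard_coe_finset]
  rw [hdt]
  rw [Finset.sum_congr rfl (fun D hD => by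
    rw [(Finset.mem_filter.1 hD).2])]
  rw [Finset.sum_const, nsmul_eq_mul]
  simp

end Aux

section P3

open Finset

variable {W : Type*} [Fintype W] [DecidableEq W] (H : SimpleGraph W)

omit [Fintype W] [DecidableEq W] in
lemma attachP3_tds_iff (D : Finset (W × Fin 3)) :
    (attachP3 H).IsTDS D ↔ ∀ u : W, (u, 1) ∈ D ∧ ((u, 0) ∈ D ∨ (u, 2) ∈ D) := by
  constructor
  · intro h u
    constructor
    · obtain ⟨x, hx, hadj⟩ := h (u, 2)
      rw [attachP3, SimpleGraph.fromRel_adj] at hadj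
      obtain ⟨x1, x2⟩ := x
      have : x1 = u ∧ x2 = 1 := by
        obtain ⟨-, h1 | h1⟩ := hadj <;> fin_cases x2 <;> simp_all
      obtain ⟨rfl, rfl⟩ := this
      exact hx
    · obtain ⟨x, hx, hadj⟩ := h (u, 1)
      rw [attachP3, SimpleGraph.fromRel_adj] at hadj
      obtain ⟨x1, x2⟩ := x
      have : x1 = u ∧ (x2 = 0 ∨ x2 = 2) := by
        obtain ⟨-, h1 | h1⟩ := hadj <;> fin_cases x2 <;> simp_all
      obtain ⟨rfl, h2⟩ := this
      rcases h2 with rfl | rfl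
      · exact Or.inl hx
      · exact Or.inr hx
  · intro h v
    obtain ⟨u, j⟩ := v
    fin_cases j
    · exact ⟨(u, 1), (h u).1, by
        rw [attachP3, SimpleGraph.fromRel_adj]
        refine ⟨by simp, Or.inl (Or.inr ⟨rfl, Or.inl ⟨rfl, rfl⟩⟩)⟩⟩
    · rcases (h u).2 with h0 | h2
      · exact ⟨(u, 0), h0, by
          rw [attachP3, SimpleGraph.fromRel_adj]
          refine ⟨by simp, Or.inr (Or.inr ⟨rfl, Or.inl ⟨rfl, rfl⟩⟩)⟩⟩
      · exact ⟨(u, 2), h2, by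
          rw [attachP3, SimpleGraph.fromRel_adj]
          refine ⟨by simp, Or.inl (Or.inr ⟨rfl, Or.inr ⟨rfl, rfl⟩⟩)⟩⟩
    · exact ⟨(u, 1), (h u).1, by
        rw [attachP3, SimpleGraph.fromRel_adj]
        refine ⟨by simp, Or.inr (Or.inr ⟨rfl, Or.inr ⟨rfl, rfl⟩⟩)⟩⟩

end P3

/-- The admissible column types. -/
def colChoices : Finset (Finset (Fin 3)) := {{0, 1}, {1, 2}, {0, 1, 2}}

lemma mem_colChoices_iff (s : Finset (Fin 3)) :
    s ∈ colChoices ↔ (1 ∈ s ∧ (0 ∈ s ∨ 2 ∈ s)) := by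
  revert s; decide

lemma sum_colChoices : ∑ s ∈ colChoices, (X : Polynomial ℂ) ^ s.card = X ^ 2 * (X + 2) := by
  have h1 : ({0, 1} : Finset (Fin 3)).card = 2 := by decide
  have h2 : ({1, 2} : Finset (Fin 3)).card = 2 := by decide
  have h3 : ({0, 1, 2} : Finset (Fin 3)).card = 3 := by decide
  have e1 : ({0, 1} : Finset (Fin 3)) ∉ ({{1, 2}, {0, 1, 2}} : Finset (Finset (Fin 3))) := by decide
  have e2 : ({1, 2} : Finset (Fin 3)) ∉ ({{0, 1, 2}} : Finset (Finset (Fin 3))) := by decide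
  rw [colChoices, Finset.sum_insert e1, Finset.sum_insert e2, Finset.sum_singleton, h1, h2, h3]
  ring

/-- For any graph `H` of order `n ≥ 1`, `D_t(H(3), x) = x^{2n}(x+2)^n`. -/
theorem stmt_16 {W : Type*} [Fintype W] (H : SimpleGraph W)
    (hn : 1 ≤ Fintype.card W) :
    (attachP3 H).DtPoly =
      X ^ (2 * Fintype.card W) * (X + 2) ^ (Fintype.card W) := by
  classical
  have : Nonempty W := Fintype.card_pos_iff.mp hn
  have : Nonempty (W × Fin 3) := ⟨(Classical.arbitrary W, 0)⟩
  rw [DtPoly_eq_sum_TDS]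
  -- bijection with piFinset
  have key : ∑ D ∈ Finset.univ.filter (attachP3 H).IsTDS, (X : Polynomial ℂ) ^ D.card
      = ∑ g ∈ Fintype.piFinset (fun _ : W => colChoices),
          (X : Polynomial ℂ) ^ (Finset.univ.filter (fun p : W × Fin 3 => p.2 ∈ g p.1)).card := by
    refine Finset.sum_bij' (fun D _ => fun u => Finset.univ.filter (fun j => (u, j) ∈ D))
      (fun g _ => Finset.univ.filter (fun p : W × Fin 3 => p.2 ∈ g p.1)) ?_ ?_ ?_ ?_ ?_
    · intro D hD
      rw [Finset.mem_filter] at hD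
      rw [Fintype.mem_piFinset]
      intro u
      rw [mem_colChoices_iff]
      have := (attachP3_tds_iff H D).1 hD.2 u
      simpa using this
    · intro g hg
      rw [Finset.mem_filter]
      refine ⟨Finset.mem_univ _, (attachP3_tds_iff H _).2 fun u => ?_⟩
      rw [Fintype.mem_piFinset] at hg
      have := (mem_colChoices_iff (g u)).1 (hg u)
      simpa using this
    · intro D hD
      ext ⟨u, j⟩
      simp
    · intro g hg
      funext u
      ext j
      simp
    · intro D hD
      have hDeq : (Finset.univ.filter
          (fun p : W × Fin 3 => p.2 ∈ Finset.univ.filter (fun j => (p.1, j) ∈ D))) = D := by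
        ext ⟨u, j⟩; simp
      rw [hDeq]
  rw [key]
  have card_eq : ∀ g : W → Finset (Fin 3),
      (Finset.univ.filter (fun p : W × Fin 3 => p.2 ∈ g p.1)).card = ∑ u, (g u).card := by
    intro g
    rw [Finset.card_filter, Fintype.sum_prod_type]
    refine Finset.sum_congr rfl fun u _ => ?_
    rw [← Finset.card_filter]
    congr 1
    exact Finset.filter_univ_mem (g u)
  calc ∑ g ∈ Fintype.piFinset (fun _ : W => colChoices),
          (X : Polynomial ℂ) ^ (Finset.univ.filter (fun p : W × Fin 3 => p.2 ∈ g p.1)).card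
      = ∑ g ∈ Fintype.piFinset (fun _ : W => colChoices),
          ∏ u, (X : Polynomial ℂ) ^ (g u).card := by
        refine Finset.sum_congr rfl fun g _ => ?_
        rw [card_eq, ← Finset.prod_pow_eq_pow_sum]
    _ = ∏ _u : W, ∑ s ∈ colChoices, (X : Polynomial ℂ) ^ s.card := by
        rw [Finset.prod_univ_sum]
    _ = (X ^ 2 * (X + 2)) ^ (Fintype.card W) := by
        rw [sum_colChoices, Finset.prod_const, Finset.card_univ]
    _ = X ^ (2 * Fintype.card W) * (X + 2) ^ (Fintype.card W) := by
        rw [mul_pow, ← pow_mul]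
end
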